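/- Every non-cyclic subgroup of D'_{n·2^q} (n odd, n > 1, q > 1) is of the form ⟨u^k, w⟩ ≅ D'_{(n/k)·2^q} for some divisor k of n, up to conjugacy; moreover such a subgroup is normal only if it is the whole group. -/

import Mathlib

/-- Relations of the dicyclic-type group
`D'_{n·2^q} = ⟨u, w | uⁿ = w^{2^q} = 1, uwu = w⟩`,
with `u` the letter `0` and `w` the letter `1`. -/
def DprimeRels (n q : ℕ) : Set (FreeGroup (Fin 2)) :=
  { (FreeGroup.of 0) ^ n,
    (FreeGroup.of 1) ^ (2 ^ q),
    (FreeGroup.of 0 * FreeGroup.of 1 * FreeGroup.of 0) * (FreeGroup.of 1)⁻¹ }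

/-- The dicyclic-type group `D'_{n·2^q}`. -/
abbrev Dprime (n q : ℕ) := PresentedGroup (DprimeRels n q)

/-- The generator `u` of `D'_{n·2^q}`. -/
def Dprime.u (n q : ℕ) : Dprime n q := PresentedGroup.of 0

/-- The generator `w` of `D'_{n·2^q}`. -/
def Dprime.w (n q : ℕ) : Dprime n q := PresentedGroup.of 1


namespace DpAux

instance instNeZeroPow (q : ℕ) : NeZero (2^q) := ⟨pow_ne_zero q two_ne_zero⟩

lemma neg_one_pow_mod {M : Type*} [Monoid M] [HasDistribNeg M] (x m : ℕ) (hm : Even m) :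
    (-1 : M) ^ (x % m) = (-1) ^ x := by
  conv_rhs => rw [← Nat.div_add_mod x m]
  rw [pow_add, pow_mul, hm.neg_one_pow, one_pow, one_mul]

@[ext]
structure Md (n q : ℕ) where
  a : ZMod n
  b : ZMod (2 ^ q)

namespace Md

variable {n q : ℕ}

/-- sign of the action -/
def sgn (n : ℕ) (b : ZMod (2 ^ q)) : ZMod n := (-1) ^ b.val

lemma sgn_add (b d : ZMod (2 ^ q)) : sgn n (b + d) = sgn n b * sgn n d := by
  unfold sgn
  rw [ZMod.val_add, ← pow_add]
  rcases Nat.eq_zero_or_pos q with hq | hq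
  · subst hq; have h0 : ∀ x : ZMod (2 ^ 0), x.val = 0 := fun x => Nat.lt_one_iff.mp (ZMod.val_lt x)
    rw [h0 b, h0 d]; simp
  · exact neg_one_pow_mod _ _ ⟨2 ^ (q - 1), by
      rw [← two_mul, ← pow_succ']; congr 1; omega⟩

@[simp] lemma sgn_zero : sgn n (0 : ZMod (2 ^ q)) = 1 := by
  simp [sgn, ZMod.val_zero]

lemma sgn_mul_self (b : ZMod (2 ^ q)) : sgn n b * sgn n b = 1 := by
  unfold sgn; rw [← pow_add]; exact Even.neg_one_pow ⟨b.val, by ring⟩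

lemma sgn_neg (b : ZMod (2 ^ q)) : sgn n (-b) = sgn n b := by
  have h1 : sgn n (-b) * sgn n b = 1 := by rw [← sgn_add]; simp
  calc sgn n (-b) = sgn n (-b) * (sgn n b * sgn n b) := by rw [sgn_mul_self, mul_one]
    _ = (sgn n (-b) * sgn n b) * sgn n b := by ring
    _ = sgn n b := by rw [h1, one_mul]

instance : Mul (Md n q) := ⟨fun x y => ⟨x.a + sgn n x.b * y.a, x.b + y.b⟩⟩
instance : One (Md n q) := ⟨⟨0, 0⟩⟩
instance : Inv (Md n q) := ⟨fun x => ⟨-(sgn n (-x.b) * x.a), -x.b⟩⟩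

lemma mul_def (x y : Md n q) : x * y = ⟨x.a + sgn n x.b * y.a, x.b + y.b⟩ := rfl
lemma one_def : (1 : Md n q) = ⟨0, 0⟩ := rfl
lemma inv_def (x : Md n q) : x⁻¹ = ⟨-(sgn n (-x.b) * x.a), -x.b⟩ := rfl

instance : Group (Md n q) where
  mul_assoc x y z := by
    simp only [mul_def, sgn_add]; ext <;> dsimp <;> ring
  one_mul x := by simp [mul_def, one_def]
  mul_one x := by simp [mul_def, one_def]
  inv_mul_cancel x := by
    simp only [mul_def, inv_def, one_def, sgn_neg]; ext <;> dsimp <;> ring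

@[simp] lemma mul_a (x y : Md n q) : (x * y).a = x.a + sgn n x.b * y.a := rfl
@[simp] lemma mul_b (x y : Md n q) : (x * y).b = x.b + y.b := rfl
@[simp] lemma one_a : (1 : Md n q).a = 0 := rfl
@[simp] lemma one_b : (1 : Md n q).b = 0 := rfl
@[simp] lemma inv_a (x : Md n q) : (x⁻¹).a = -(sgn n x.b * x.a) := by
  show -(sgn n (-x.b) * x.a) = _; rw [sgn_neg]
@[simp] lemma inv_b (x : Md n q) : (x⁻¹).b = -x.b := rfl

lemma pow_b0 (a : ZMod n) (m : ℕ) :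
    (Md.mk a 0 : Md n q) ^ m = Md.mk ((m : ZMod n) * a) 0 := by
  induction m with
  | zero => ext <;> simp [show ((1:Md n q)).a = 0 from rfl]
  | succ m ih => rw [pow_succ, ih]; ext <;> push_cast <;> simp <;> ring

lemma pow_a0 (b : ZMod (2 ^ q)) (m : ℕ) :
    (Md.mk 0 b : Md n q) ^ m = Md.mk 0 ((m : ZMod (2 ^ q)) * b) := by
  induction m with
  | zero => ext <;> simp
  | succ m ih => rw [pow_succ, ih]; ext <;> push_cast <;> simp <;> ring

end Md
end DpAux

namespace DpAux

lemma rel_one {α : Type*} {rels : Set (FreeGroup α)} {r : FreeGroup α} (h : r ∈ rels) :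
    PresentedGroup.mk rels r = 1 :=
  (QuotientGroup.eq_one_iff r).mpr (Subgroup.subset_normalClosure h)

variable {n q : ℕ}

open Dprime

lemma u_def : u n q = PresentedGroup.mk (DprimeRels n q) (FreeGroup.of 0) := rfl
lemma w_def : w n q = PresentedGroup.mk (DprimeRels n q) (FreeGroup.of 1) := rfl

lemma u_pow_n : (u n q) ^ n = 1 := by
  rw [u_def, ← map_pow]
  exact rel_one (Set.mem_insert _ _)

lemma w_pow : (w n q) ^ (2 ^ q) = 1 := by
  rw [w_def, ← map_pow]
  exact rel_one (Set.mem_insert_of_mem _ (Set.mem_insert _ _))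

lemma uwu : u n q * w n q * u n q = w n q := by
  have h : PresentedGroup.mk (DprimeRels n q)
      ((FreeGroup.of 0 * FreeGroup.of 1 * FreeGroup.of 0) * (FreeGroup.of 1)⁻¹) = 1 :=
    rel_one (Set.mem_insert_of_mem _ (Set.mem_insert_of_mem _ rfl))
  rw [map_mul, map_mul, map_mul, map_inv] at h
  rw [u_def, w_def, ← mul_inv_eq_one]
  simpa using h

lemma w_mul_u : w n q * u n q = (u n q)⁻¹ * w n q := by
  have h := uwu (n := n) (q := q)
  calc w n q * u n q = (u n q)⁻¹ * (u n q * w n q * u n q) := by group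
    _ = (u n q)⁻¹ * w n q := by rw [h]

lemma w_conj_u : w n q * u n q * (w n q)⁻¹ = (u n q)⁻¹ := by
  rw [w_mul_u]; group

lemma w_conj_u_pow (j : ℕ) : w n q * (u n q) ^ j * (w n q)⁻¹ = ((u n q) ^ j)⁻¹ := by
  rw [← conj_pow, w_conj_u, inv_pow]

lemma wpow_conj_u_pow (m j : ℕ) :
    (w n q) ^ m * (u n q) ^ j * ((w n q) ^ m)⁻¹ =
      if Even m then (u n q) ^ j else ((u n q) ^ j)⁻¹ := by
  induction m with
  | zero => simp
  | succ m ih =>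
    have : (w n q) ^ (m + 1) * (u n q) ^ j * ((w n q) ^ (m + 1))⁻¹ =
        w n q * ((w n q) ^ m * (u n q) ^ j * ((w n q) ^ m)⁻¹) * (w n q)⁻¹ := by
      rw [pow_succ']; group
    rw [this, ih]
    rcases Nat.even_or_odd m with he | ho
    · rw [if_pos he, if_neg (by simp [Nat.even_add_one, he])]
      exact w_conj_u_pow j
    · rw [if_neg (Nat.not_even_iff_odd.mpr ho), if_pos (by simp [Nat.even_add_one, Nat.not_even_iff_odd.mpr ho])]
      have h2 : w n q * ((u n q) ^ j)⁻¹ * (w n q)⁻¹ =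
          (w n q * (u n q) ^ j * (w n q)⁻¹)⁻¹ := by group
      rw [h2, w_conj_u_pow, inv_inv]

section Maps

variable (n q)

/-- `U a = u ^ a.val` -/
def U [NeZero n] (a : ZMod n) : Dprime n q := (u n q) ^ a.val
/-- `W b = w ^ b.val` -/
def W (b : ZMod (2 ^ q)) : Dprime n q := (w n q) ^ b.val

variable {n q}
variable [NeZero n]

lemma U_natCast (m : ℕ) : U n q (m : ZMod n) = (u n q) ^ m := by
  rw [U, ZMod.val_natCast, ← pow_eq_pow_mod m u_pow_n]

lemma W_natCast (m : ℕ) : W n q (m : ZMod (2 ^ q)) = (w n q) ^ m := by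
  rw [W, ZMod.val_natCast, ← pow_eq_pow_mod m w_pow]

lemma U_add (a c : ZMod n) : U n q (a + c) = U n q a * U n q c := by
  rw [U, U, U, ZMod.val_add, ← pow_eq_pow_mod _ u_pow_n, pow_add]

lemma W_add (b d : ZMod (2 ^ q)) : W n q (b + d) = W n q b * W n q d := by
  rw [W, W, W, ZMod.val_add, ← pow_eq_pow_mod _ w_pow]
  exact pow_add _ _ _

lemma U_zero : U n q (0 : ZMod n) = 1 := by simp [U]
lemma W_zero : W n q (0 : ZMod (2 ^ q)) = 1 := by simp [W]

lemma U_neg (a : ZMod n) : U n q (-a) = (U n q a)⁻¹ := by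
  have : U n q (-a) * U n q a = 1 := by rw [← U_add]; simp [U_zero]
  exact eq_inv_of_mul_eq_one_left this

lemma W_conj_U (b : ZMod (2 ^ q)) (c : ZMod n) :
    W n q b * U n q c * (W n q b)⁻¹ = U n q (Md.sgn n b * c) := by
  rw [W, U, wpow_conj_u_pow]
  rcases Nat.even_or_odd b.val with he | ho
  · rw [if_pos he, Md.sgn, he.neg_one_pow, one_mul]; rfl
  · rw [if_neg (Nat.not_even_iff_odd.mpr ho), Md.sgn, ho.neg_one_pow,
      neg_one_mul, U_neg, U]

variable (n q)

/-- the homomorphism from the model to the presented group -/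
def σ : Md n q →* Dprime n q :=
  MonoidHom.mk' (fun x => U n q x.a * W n q x.b) (by
    intro x y
    rw [Md.mul_def]
    dsimp only
    rw [U_add, W_add]
    have key : U n q (Md.sgn n x.b * y.a) = W n q x.b * U n q y.a * (W n q x.b)⁻¹ :=
      (W_conj_U x.b y.a).symm
    rw [key]; group)

lemma σ_apply (x : Md n q) : σ n q x = U n q x.a * W n q x.b := rfl

end Maps

end DpAux

namespace DpAux
open Dprime
section Theta

variable (n q : ℕ)

/-- images of the generators in the model -/
def fgen : Fin 2 → Md n q := fun i => if i = 0 then ⟨1, 0⟩ else ⟨0, 1⟩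

variable {n q}

lemma val_one_pow (hq : 1 ≤ q) : (1 : ZMod (2 ^ q)).val = 1 :=
  haveI : Fact (1 < 2 ^ q) := ⟨by calc 1 < 2 := one_lt_two
                                   _ ≤ 2 ^ q := by exact Nat.le_self_pow (by omega) 2⟩
  ZMod.val_one _

lemma sgn_one (hq : 1 ≤ q) : Md.sgn n (1 : ZMod (2 ^ q)) = -1 := by
  rw [Md.sgn, val_one_pow hq, pow_one]

lemma rel_check (hq : 1 ≤ q) :
    ∀ r ∈ DprimeRels n q, FreeGroup.lift (fgen n q) r = 1 := by
  have h0 : FreeGroup.lift (fgen n q) (FreeGroup.of 0) = (⟨1, 0⟩ : Md n q) := by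
    simp [fgen]
  have h1 : FreeGroup.lift (fgen n q) (FreeGroup.of 1) = (⟨0, 1⟩ : Md n q) := by
    simp [fgen]
  intro r hr
  simp only [DprimeRels, Set.mem_insert_iff, Set.mem_singleton_iff] at hr
  rcases hr with rfl | rfl | rfl
  · rw [map_pow, h0, Md.pow_b0]
    ext <;> simp
  · rw [map_pow, h1, Md.pow_a0]
    ext <;> simp
  · rw [map_mul, map_mul, map_mul, map_inv, h0, h1, mul_inv_eq_one]
    ext <;> simp [Md.mul_def, sgn_one hq]

variable (n q) in
/-- the homomorphism from the presented group to the model -/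
def θ (hq : 1 ≤ q) : Dprime n q →* Md n q := PresentedGroup.toGroup (rel_check hq)

lemma val_one_of (hn : 1 < n) : (1 : ZMod n).val = 1 :=
  haveI : Fact (1 < n) := ⟨hn⟩
  ZMod.val_one _

lemma θ_u (hq : 1 ≤ q) : θ n q hq (u n q) = (⟨1, 0⟩ : Md n q) := by
  show PresentedGroup.toGroup (rel_check hq) (PresentedGroup.of 0) = _
  rw [PresentedGroup.toGroup.of]; simp [fgen]

lemma θ_w (hq : 1 ≤ q) : θ n q hq (w n q) = (⟨0, 1⟩ : Md n q) := by
  show PresentedGroup.toGroup (rel_check hq) (PresentedGroup.of 1) = _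
  rw [PresentedGroup.toGroup.of]; simp [fgen]

lemma θσ [NeZero n] (hq : 1 ≤ q) (x : Md n q) : θ n q hq (σ n q x) = x := by
  rw [σ_apply, map_mul, U, W, map_pow, map_pow, θ_u hq, θ_w hq,
    Md.pow_b0, Md.pow_a0]
  ext <;> simp [Md.mul_def, ZMod.natCast_rightInverse _]

lemma σθ (hn : 1 < n) (hq : 1 ≤ q) (x : Dprime n q) :
    haveI : NeZero n := ⟨by omega⟩
    σ n q (θ n q hq x) = x := by
  haveI : NeZero n := ⟨by omega⟩
  have hcomp : (σ n q).comp (θ n q hq) = MonoidHom.id _ := by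
    apply PresentedGroup.ext
    intro i
    fin_cases i
    · show σ n q (θ n q hq (u n q)) = u n q
      rw [θ_u hq, σ_apply]
      simp only [W_zero, mul_one, U]
      rw [val_one_of hn, pow_one]
    · show σ n q (θ n q hq (w n q)) = w n q
      rw [θ_w hq, σ_apply]
      simp only [U_zero, one_mul, W]
      rw [val_one_pow hq, pow_one]
  exact DFunLike.congr_fun hcomp x

variable (n q) in
/-- the isomorphism between the presented group and the model -/
def eIso (hn : 1 < n) (hq : 1 ≤ q) : Dprime n q ≃* Md n q :=
  haveI : NeZero n := ⟨by omega⟩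
  { toFun := θ n q hq
    invFun := σ n q
    left_inv := fun x => σθ hn hq x
    right_inv := fun x => θσ hq x
    map_mul' := map_mul _ }

lemma eIso_u (hn : 1 < n) (hq : 1 ≤ q) : eIso n q hn hq (u n q) = (⟨1, 0⟩ : Md n q) :=
  θ_u hq

lemma eIso_w (hn : 1 < n) (hq : 1 ≤ q) : eIso n q hn hq (w n q) = (⟨0, 1⟩ : Md n q) :=
  θ_w hq

end Theta
end DpAux

namespace DpAux
namespace Md

variable {n q : ℕ}

lemma pow_b (x : Md n q) (t : ℕ) : (x ^ t).b = (t : ZMod (2 ^ q)) * x.b := by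
  induction t with
  | zero => simp
  | succ t ih => rw [pow_succ, mul_b, ih]; push_cast; ring

lemma sgn_natCast_mul (m : ℕ) (b : ZMod (2 ^ q)) :
    sgn n ((m : ZMod (2 ^ q)) * b) = (sgn n b) ^ m := by
  induction m with
  | zero => simp
  | succ m ih => push_cast; rw [add_mul, one_mul, sgn_add, ih, pow_succ]

lemma pow_of_sgn_one (x : Md n q) (hx : sgn n x.b = 1) (m : ℕ) :
    x ^ m = ⟨(m : ZMod n) * x.a, (m : ZMod (2 ^ q)) * x.b⟩ := by
  induction m with
  | zero => ext <;> simp [one_def]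
  | succ m ih =>
      rw [pow_succ, ih, mul_def]
      have hs : sgn n ((m : ZMod (2 ^ q)) * x.b) = 1 := by
        rw [sgn_natCast_mul, hx, one_pow]
      ext
      · dsimp; rw [hs]; push_cast; ring
      · dsimp; push_cast; ring

lemma even_sgn {x : Md n q} (hx : Even x.b.val) : sgn n x.b = 1 := hx.neg_one_pow
lemma odd_sgn {x : Md n q} (hx : Odd x.b.val) : sgn n x.b = -1 := hx.neg_one_pow

lemma sq_of_odd {x : Md n q} (hx : Odd x.b.val) : x ^ 2 = ⟨0, 2 * x.b⟩ := by
  rw [pow_two, mul_def]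
  ext <;> dsimp
  · rw [odd_sgn hx]; ring
  · ring

lemma pow_odd_exp {x : Md n q} (hx : Odd x.b.val) (t : ℕ) :
    x ^ (2 * t + 1) = ⟨x.a, ((2 * t + 1 : ℕ) : ZMod (2 ^ q)) * x.b⟩ := by
  have h2 : sgn n ((2 : ZMod (2 ^ q)) * x.b) = 1 := by
    have : (2 : ZMod (2 ^ q)) * x.b = x.b + x.b := by ring
    rw [this, sgn_add, sgn_mul_self]
  rw [pow_add, pow_mul, sq_of_odd hx, pow_one]
  have h2' : (2 : ZMod (2 ^ q)) * x.b = (Md.mk (0 : ZMod n) (2 * x.b)).b := rfl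
  rw [pow_of_sgn_one _ (by rw [← h2']; exact h2), mul_def]
  ext <;> dsimp
  · rw [mul_zero, zero_add, sgn_natCast_mul, h2, one_pow, one_mul]
  · push_cast; ring

end Md

lemma isCyclic_zpowers {G : Type*} [Group G] (z : G) : IsCyclic (Subgroup.zpowers z) := by
  refine ⟨⟨⟨z, Subgroup.mem_zpowers z⟩, fun x => ?_⟩⟩
  obtain ⟨m, hm⟩ := x.2
  exact ⟨m, Subtype.ext (by rw [← hm]; simp)⟩

variable {n q : ℕ}

lemma two_pow_eq (hq : 1 ≤ q) : 2 * 2 ^ (q - 1) = 2 ^ q := by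
  rw [← pow_succ']; congr 1; omega

lemma cyclic_of_all_even (hodd : Odd n) (hn : 1 < n) (hq : 1 < q)
    (K : Subgroup (Md n q)) (hev : ∀ x ∈ K, Even x.b.val) : IsCyclic K := by
  haveI : NeZero n := ⟨by omega⟩
  set z : Md n q := ⟨1, ((2 : ℕ) : ZMod (2 ^ q))⟩ with hz
  have hzb : Even ((z.b).val) := by
    have : (z.b).val = 2 := by
      rw [hz, ZMod.val_natCast, Nat.mod_eq_of_lt]
      calc (2:ℕ) = 2 ^ 1 := rfl
        _ < 2 ^ q := Nat.pow_lt_pow_right one_lt_two hq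
    rw [this]; exact even_two
  have hle : K ≤ Subgroup.zpowers z := by
    intro x hx
    obtain ⟨c, hc⟩ := hev x hx
    have co : Nat.Coprime n (2 ^ (q - 1)) :=
      Nat.Coprime.pow_right _ hodd.coprime_two_right
    obtain ⟨m, h1, h2⟩ := Nat.chineseRemainder co x.a.val c
    refine ⟨(m : ℤ), ?_⟩
    show z ^ (m : ℤ) = x
    rw [zpow_natCast, Md.pow_of_sgn_one z (Md.even_sgn hzb) m]
    ext <;> dsimp
    · rw [mul_one]
      calc ((m : ℕ) : ZMod n) = ((x.a.val : ℕ) : ZMod n) :=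
            (ZMod.natCast_eq_natCast_iff _ _ _).mpr h1
        _ = x.a := ZMod.natCast_rightInverse _
    · have h3 : (2 * m) ≡ 2 * c [MOD 2 ^ q] := by
        have := Nat.ModEq.mul_left' (c := 2) h2
        rwa [two_pow_eq (by omega)] at this
      calc ((m : ℕ) : ZMod (2^q)) * ((2:ℕ) : ZMod (2^q)) = ((2 * m : ℕ) : ZMod (2^q)) := by
            push_cast; ring
        _ = ((2 * c : ℕ) : ZMod (2^q)) := (ZMod.natCast_eq_natCast_iff _ _ _).mpr h3
        _ = ((x.b.val : ℕ) : ZMod (2^q)) := by rw [hc]; push_cast; ring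
        _ = x.b := ZMod.natCast_rightInverse _
  haveI := isCyclic_zpowers z
  exact Subgroup.isCyclic_of_le hle

/-- in a noncyclic subgroup there is an element with second coordinate `1` -/
lemma exists_b_one (hodd : Odd n) (hn : 1 < n) (hq : 1 < q)
    (K : Subgroup (Md n q)) (hK : ¬ IsCyclic K) :
    ∃ a₀ : ZMod n, (⟨a₀, 1⟩ : Md n q) ∈ K := by
  haveI : NeZero n := ⟨by omega⟩
  -- get an element with odd second coordinate
  have hodd_elt : ∃ x ∈ K, Odd x.b.val := by
    by_contra hcon
    push_neg at hcon
    exact hK (cyclic_of_all_even hodd hn hq K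
      (fun x hx => Nat.not_odd_iff_even.mp (hcon x hx)))
  obtain ⟨x, hxK, hbo⟩ := hodd_elt
  have h2q : 1 < 2 ^ q := by
    calc 1 < 2 := one_lt_two
      _ ≤ 2 ^ q := Nat.le_self_pow (by omega) 2
  have hco : Nat.Coprime x.b.val (2 ^ q) :=
    Nat.Coprime.pow_right _ hbo.coprime_two_right
  have hu : IsUnit ((x.b.val : ℕ) : ZMod (2 ^ q)) := (ZMod.isUnit_iff_coprime _ _).mpr hco
  rw [ZMod.natCast_rightInverse _] at hu
  obtain ⟨v, hv⟩ := hu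
  set c : ZMod (2 ^ q) := ((v⁻¹ : (ZMod (2 ^ q))ˣ) : ZMod (2 ^ q)) with hcdef
  have hcb : c * x.b = 1 := by rw [hcdef, ← hv]; exact v.inv_mul
  have hcodd : Odd c.val := by
    have h1 : c.val * x.b.val % 2 ^ q = 1 := by
      rw [← ZMod.val_mul, hcb, val_one_of h2q]
    have h2 : c.val * x.b.val ≡ 1 [MOD 2 ^ q] := by
      show _ % _ = _ % _
      rw [h1, Nat.mod_eq_of_lt h2q]
    have h3 : c.val * x.b.val ≡ 1 [MOD 2] :=
      Nat.ModEq.of_dvd (dvd_pow_self 2 (by omega)) h2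
    have h4 : Odd (c.val * x.b.val) := by
      rw [Nat.odd_iff]
      exact h3
    exact (Nat.odd_mul.mp h4).1
  obtain ⟨t, ht⟩ := hcodd
  have hy := K.pow_mem hxK (2 * t + 1)
  rw [Md.pow_odd_exp hbo t] at hy
  refine ⟨x.a, ?_⟩
  have heq : ((2 * t + 1 : ℕ) : ZMod (2 ^ q)) * x.b = 1 := by
    have : ((2 * t + 1 : ℕ) : ZMod (2 ^ q)) = c := by
      rw [← ht, ZMod.natCast_rightInverse]
    rw [this, hcb]
  rwa [heq] at hy

end DpAux

namespace DpAux
variable {n q : ℕ}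

/-- the subgroup of first coordinates with trivial second coordinate -/
def axis (K : Subgroup (Md n q)) : AddSubgroup (ZMod n) where
  carrier := {a | (⟨a, 0⟩ : Md n q) ∈ K}
  zero_mem' := by show (⟨0, 0⟩ : Md n q) ∈ K; rw [← Md.one_def]; exact K.one_mem
  add_mem' := by
    intro a b ha hb
    have := K.mul_mem ha hb
    rw [Md.mul_def] at this
    simpa using this
  neg_mem' := by
    intro a ha
    have := K.inv_mem ha
    rw [Md.inv_def] at this
    simpa using this

lemma mem_axis {K : Subgroup (Md n q)} {a : ZMod n} :
    a ∈ axis K ↔ (⟨a, 0⟩ : Md n q) ∈ K := Iff.rfl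

lemma gen_of_addSubgroup [NeZero n] (hn : 0 < n) (A : AddSubgroup (ZMod n)) :
    ∃ k : ℕ, 0 < k ∧ k ∣ n ∧ ((k : ZMod n) ∈ A) ∧
      ∀ a : ZMod n, a ∈ A ↔ ∃ t : ℕ, a = ((k * t : ℕ) : ZMod n) := by
  classical
  have hS : ∃ m : ℕ, 0 < m ∧ ((m : ZMod n) ∈ A) := ⟨n, hn, by rw [ZMod.natCast_self]; exact A.zero_mem⟩
  set k := Nat.find hS with hkdef
  obtain ⟨hk0, hkA⟩ := Nat.find_spec hS
  have hdvd : ∀ m : ℕ, ((m : ZMod n) ∈ A) → k ∣ m := by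
    intro m hm
    rcases Nat.eq_zero_or_pos (m % k) with h0 | hpos
    · exact Nat.dvd_of_mod_eq_zero h0
    · exfalso
      have hm' : (m : ZMod n) = (m / k) • ((k : ℕ) : ZMod n) + ((m % k : ℕ) : ZMod n) := by
        rw [nsmul_eq_mul]
        conv_lhs => rw [← Nat.div_add_mod m k]
        push_cast; ring
      have hmem : ((m % k : ℕ) : ZMod n) ∈ A := by
        have := A.sub_mem hm (A.nsmul_mem hkA (m / k))
        rwa [hm', add_sub_cancel_left] at this
      exact Nat.find_min hS (Nat.mod_lt _ hk0) ⟨hpos, hmem⟩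
  refine ⟨k, hk0, hdvd n (by rw [ZMod.natCast_self]; exact A.zero_mem), hkA, fun a => ⟨fun ha => ?_, ?_⟩⟩
  · have hval : ((a.val : ℕ) : ZMod n) ∈ A := by
      rw [ZMod.natCast_rightInverse a]; exact ha
    obtain ⟨t, ht⟩ := hdvd a.val hval
    exact ⟨t, by rw [← ht, ZMod.natCast_rightInverse a]⟩
  · rintro ⟨t, rfl⟩
    have : ((k * t : ℕ) : ZMod n) = t • ((k : ℕ) : ZMod n) := by
      rw [nsmul_eq_mul]; push_cast; ring
    rw [this]; exact A.nsmul_mem hkA t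

lemma K_eq_closure [NeZero n] {K : Subgroup (Md n q)} {a₀ : ZMod n} {k : ℕ}
    (hy : (⟨a₀, 1⟩ : Md n q) ∈ K) (hkA : ((k : ℕ) : ZMod n) ∈ axis K)
    (hax : ∀ a : ZMod n, a ∈ axis K ↔ ∃ t : ℕ, a = ((k * t : ℕ) : ZMod n)) :
    K = Subgroup.closure {(⟨(k : ZMod n), 0⟩ : Md n q), ⟨a₀, 1⟩} := by
  set L := Subgroup.closure {(⟨(k : ZMod n), 0⟩ : Md n q), (⟨a₀, 1⟩ : Md n q)} with hLdef
  apply le_antisymm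
  · intro x hx
    set y : Md n q := ⟨a₀, 1⟩ with hydef
    have hz : x * (y ^ x.b.val)⁻¹ ∈ K := K.mul_mem hx (K.inv_mem (K.pow_mem hy _))
    have hzb : (x * (y ^ x.b.val)⁻¹).b = 0 := by
      rw [Md.mul_b, Md.inv_b, Md.pow_b]
      show x.b + -(((x.b.val : ℕ) : ZMod (2 ^ q)) * (1 : ZMod (2 ^ q))) = 0
      rw [mul_one, ZMod.natCast_rightInverse x.b]; ring
    set z := x * (y ^ x.b.val)⁻¹ with hzdef
    have hzz : z = ⟨z.a, 0⟩ := Md.ext rfl hzb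
    have hz' : (⟨z.a, 0⟩ : Md n q) ∈ K := by rwa [← hzz]
    obtain ⟨t, ht⟩ := (hax z.a).mp hz'
    have hzc : z ∈ L := by
      have hpow : (⟨(k : ZMod n), 0⟩ : Md n q) ^ t = ⟨z.a, 0⟩ := by
        rw [Md.pow_b0, ht]; congr 1; push_cast; ring
      have hmem := L.pow_mem (Subgroup.subset_closure
        (Set.mem_insert (⟨(k : ZMod n), 0⟩ : Md n q) _)) t
      rw [hpow] at hmem
      rwa [← hzz] at hmem
    have hyc : y ∈ L :=
      Subgroup.subset_closure (Set.mem_insert_of_mem _ rfl)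
    have hxz : x = z * y ^ x.b.val := by rw [hzdef]; group
    rw [hxz]
    exact L.mul_mem hzc (L.pow_mem hyc _)
  · rw [Subgroup.closure_le]
    rintro p (rfl | rfl)
    · exact hkA
    · exact hy

end DpAux

namespace DpAux
variable {n q : ℕ}

lemma conj_normalize (hodd : Odd n) (hq : 1 ≤ q) (a₀ : ZMod n) :
    ∃ g : Md n q, g * ⟨a₀, 1⟩ * g⁻¹ = ⟨0, 1⟩ ∧
      ∀ a : ZMod n, g * ⟨a, 0⟩ * g⁻¹ = ⟨a, 0⟩ := by
  set inv2 : ZMod n := (((n + 1) / 2 : ℕ) : ZMod n) with hinv2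
  have h2inv : (2 : ZMod n) * inv2 = 1 := by
    have hnat : 2 * ((n + 1) / 2) = n + 1 := by
      obtain ⟨r, hr⟩ := hodd; omega
    calc (2 : ZMod n) * inv2 = ((2 * ((n + 1) / 2) : ℕ) : ZMod n) := by push_cast; ring
      _ = ((n + 1 : ℕ) : ZMod n) := by rw [hnat]
      _ = 1 := by push_cast; rw [ZMod.natCast_self]; ring
  refine ⟨⟨-(a₀ * inv2), 0⟩, ?_, ?_⟩
  · rw [Md.inv_def, Md.mul_def, Md.mul_def]
    ext <;> dsimp <;>
      simp only [Md.sgn_zero, neg_zero, zero_add, sgn_one hq, one_mul, neg_neg]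
    · linear_combination (-a₀) * h2inv
    · ring
  · intro a
    rw [Md.inv_def, Md.mul_def, Md.mul_def]
    ext <;> dsimp <;> simp only [Md.sgn_zero, neg_zero, add_zero] <;> ring

section Phi

variable (m k : ℕ)

/-- multiplication by `k` from `ZMod m` to `ZMod n` where `n = k * m` -/
def ψ (hkm : k * m = n) : ZMod m →+ ZMod n :=
  ZMod.lift m ⟨zmultiplesHom (ZMod n) ((k : ℕ) : ZMod n), by
    show (m : ℤ) • ((k : ℕ) : ZMod n) = 0
    rw [zsmul_eq_mul]
    calc ((m : ℤ) : ZMod n) * ((k : ℕ) : ZMod n) = ((k * m : ℕ) : ZMod n) := by push_cast; ring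
      _ = 0 := by rw [hkm, ZMod.natCast_self]⟩

lemma ψ_apply [NeZero m] (hkm : k * m = n) (a : ZMod m) :
    ψ m k hkm a = ((k * a.val : ℕ) : ZMod n) := by
  have key : ψ m k hkm (((a.val : ℕ) : ℤ) : ZMod m) = ((k * a.val : ℕ) : ZMod n) := by
    rw [ψ, ZMod.lift_coe]
    show ((a.val : ℕ) : ℤ) • ((k : ℕ) : ZMod n) = _
    rw [zsmul_eq_mul]; push_cast; ring
  rw [← key]
  congr 1
  push_cast
  exact (ZMod.natCast_rightInverse a).symm

lemma sgn_cast_eq (n' : ℕ) (b : ZMod (2 ^ q)) (hb : Even b.val) :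
    Md.sgn n' b = 1 := Md.even_sgn (x := (⟨0, b⟩ : Md n' q)) hb

/-- the embedding of the model for `m` into the model for `n = k * m` -/
def Φ [NeZero m] (hkm : k * m = n) : Md m q →* Md n q :=
  MonoidHom.mk' (fun x => ⟨ψ m k hkm x.a, x.b⟩) (by
    intro x y
    rw [Md.mul_def, Md.mul_def]
    dsimp only
    ext <;> dsimp
    · rw [map_add]
      congr 1
      rcases Nat.even_or_odd x.b.val with he | ho
      · rw [Md.even_sgn (x := x) he, Md.even_sgn (x := (⟨ψ m k hkm x.a, x.b⟩ : Md n q)) he,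
          one_mul, one_mul]
      · rw [Md.odd_sgn (x := x) ho, Md.odd_sgn (x := (⟨ψ m k hkm x.a, x.b⟩ : Md n q)) ho,
          neg_one_mul, neg_one_mul, map_neg])

lemma Φ_apply [NeZero m] (hkm : k * m = n) (x : Md m q) :
    Φ m k hkm x = ⟨ψ m k hkm x.a, x.b⟩ := rfl

lemma Φ_injective [NeZero m] [NeZero n] (hkpos : 0 < k) (hkm : k * m = n) :
    Function.Injective (Φ (q := q) m k hkm) := by
  rw [injective_iff_map_eq_one]
  intro x hx
  have ha : ψ m k hkm x.a = 0 := congrArg Md.a hx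
  have hb : x.b = 0 := congrArg Md.b hx
  rw [ψ_apply m k hkm] at ha
  rw [ZMod.natCast_eq_zero_iff, ← hkm] at ha
  have hm : m ∣ x.a.val := (mul_dvd_mul_iff_left (by omega : k ≠ 0)).mp ha
  have hma : x.a.val = 0 := by
    rcases Nat.eq_zero_or_pos x.a.val with h | h
    · exact h
    · exact absurd (Nat.le_of_dvd h hm) (by have := ZMod.val_lt x.a; omega)
  have : x.a = 0 := by
    rw [← ZMod.natCast_rightInverse x.a, hma]; exact Nat.cast_zero
  rw [Md.one_def]; exact Md.ext this hb

lemma Φ_range [NeZero m] [NeZero n] (hm : 1 < m) (hkm : k * m = n) :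
    (Φ (q := q) m k hkm).range =
      Subgroup.closure {(⟨((k : ℕ) : ZMod n), 0⟩ : Md n q), ⟨0, 1⟩} := by
  apply le_antisymm
  · rintro _ ⟨x, rfl⟩
    set L := Subgroup.closure {(⟨((k : ℕ) : ZMod n), 0⟩ : Md n q), (⟨0, 1⟩ : Md n q)} with hL
    have hdecomp : x = (⟨x.a, 0⟩ : Md m q) * ⟨0, x.b⟩ := by
      rw [Md.mul_def]; exact (Md.ext (by dsimp; ring) (by dsimp; ring)).symm
    rw [hdecomp, map_mul]
    apply L.mul_mem
    · have h1 : Φ m k hkm ⟨x.a, 0⟩ = (⟨((k : ℕ) : ZMod n), 0⟩ : Md n q) ^ x.a.val := by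
        rw [Φ_apply, Md.pow_b0, ψ_apply]
        exact Md.ext (by dsimp; push_cast; ring) rfl
      rw [h1]
      exact L.pow_mem (Subgroup.subset_closure (Set.mem_insert _ _)) _
    · have h2 : Φ m k hkm ⟨0, x.b⟩ = (⟨(0 : ZMod n), 1⟩ : Md n q) ^ x.b.val := by
        rw [Φ_apply, Md.pow_a0]
        refine Md.ext (by dsimp; rw [map_zero]) ?_
        dsimp
        rw [mul_one, ZMod.natCast_rightInverse x.b]
      rw [h2]
      exact L.pow_mem (Subgroup.subset_closure (Set.mem_insert_of_mem _ rfl)) _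
  · rw [Subgroup.closure_le]
    rintro p (rfl | rfl)
    · refine ⟨⟨1, 0⟩, ?_⟩
      rw [Φ_apply, ψ_apply]
      exact Md.ext (by dsimp; rw [val_one_of hm, mul_one]) rfl
    · exact ⟨⟨0, 1⟩, by rw [Φ_apply]; exact Md.ext (by dsimp; rw [map_zero]) rfl⟩

end Phi

lemma top_gen [NeZero n] :
    Subgroup.closure {(⟨(1 : ZMod n), 0⟩ : Md n q), ⟨0, 1⟩} = ⊤ := by
  rw [eq_top_iff]
  intro x _
  set L := Subgroup.closure {(⟨(1 : ZMod n), 0⟩ : Md n q), (⟨0, 1⟩ : Md n q)} with hL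
  have hdecomp : x = (⟨(1 : ZMod n), 0⟩ : Md n q) ^ x.a.val * (⟨0, 1⟩ : Md n q) ^ x.b.val := by
    rw [Md.pow_b0, Md.pow_a0, Md.mul_def]
    refine (Md.ext ?_ ?_).symm <;> dsimp
    · rw [mul_one, mul_zero, add_zero, ZMod.natCast_rightInverse]
    · rw [zero_add, mul_one, ZMod.natCast_rightInverse]
  rw [hdecomp]
  exact L.mul_mem (L.pow_mem (Subgroup.subset_closure (Set.mem_insert _ _)) _)
    (L.pow_mem (Subgroup.subset_closure (Set.mem_insert_of_mem _ rfl)) _)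

lemma map_conj_self {G : Type*} [Group G] {K : Subgroup G} (hK : K.Normal) (g : G) :
    Subgroup.map (MulAut.conj g).toMonoidHom K = K := by
  ext x
  constructor
  · rintro ⟨y, hy, rfl⟩
    exact hK.conj_mem y hy g
  · intro hx
    exact ⟨g⁻¹ * x * g, by simpa using hK.conj_mem x hx g⁻¹, by
      show g * (g⁻¹ * x * g) * g⁻¹ = x; group⟩

end DpAux

namespace DpAux
variable {n q : ℕ}

lemma md_full (hodd : Odd n) (hn : 1 < n) (hq : 1 < q)
    (K : Subgroup (Md n q)) (hK : ¬ IsCyclic K) :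
    (∃ k : ℕ, k ∣ n ∧ 1 < n / k ∧ ∃ g : Md n q,
        Subgroup.map (MulAut.conj g).toMonoidHom K =
          Subgroup.closure {(⟨((k : ℕ) : ZMod n), 0⟩ : Md n q), ⟨0, 1⟩} ∧
        Nonempty (K ≃* Md (n / k) q)) ∧
      (K.Normal → K = ⊤) := by
  haveI : NeZero n := ⟨by omega⟩
  obtain ⟨a₀, hy⟩ := exists_b_one hodd hn hq K hK
  obtain ⟨k, hk0, hkn, hkA, hax⟩ := gen_of_addSubgroup (by omega) (axis K)
  have hKeq : K = Subgroup.closure {(⟨((k : ℕ) : ZMod n), 0⟩ : Md n q), ⟨a₀, 1⟩} :=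
    K_eq_closure hy hkA hax
  have hkltn : k < n := by
    rcases Nat.lt_or_ge k n with h | h
    · exact h
    · exfalso
      have hkeq : k = n := le_antisymm (Nat.le_of_dvd (by omega) hkn) h
      apply hK
      have hle : K ≤ Subgroup.zpowers (⟨a₀, 1⟩ : Md n q) := by
        rw [hKeq, Subgroup.closure_le]
        rintro p (rfl | rfl)
        · have h1 : (⟨((k : ℕ) : ZMod n), 0⟩ : Md n q) = 1 := by
            rw [hkeq, ZMod.natCast_self]; rfl
          rw [h1]; exact Subgroup.one_mem _
        · exact Subgroup.mem_zpowers _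
      haveI := isCyclic_zpowers (⟨a₀, 1⟩ : Md n q)
      exact Subgroup.isCyclic_of_le hle
  set m := n / k with hmdef
  have hkm : k * m = n := Nat.mul_div_cancel' hkn
  have hm1 : 1 < m := by
    have h0 : m ≠ 0 := by intro h; rw [h, mul_zero] at hkm; omega
    have h1 : m ≠ 1 := by intro h; rw [h, mul_one] at hkm; omega
    exact lt_of_le_of_ne (Nat.one_le_iff_ne_zero.mpr h0) (Ne.symm h1)
  haveI : NeZero m := ⟨by omega⟩
  obtain ⟨g, hg1, hg2⟩ := conj_normalize (q := q) hodd (by omega) a₀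
  have hconj_apply : ∀ p : Md n q, (MulAut.conj g).toMonoidHom p = g * p * g⁻¹ :=
    fun p => rfl
  have hmap : Subgroup.map (MulAut.conj g).toMonoidHom K =
      Subgroup.closure {(⟨((k : ℕ) : ZMod n), 0⟩ : Md n q), ⟨0, 1⟩} := by
    rw [hKeq, MonoidHom.map_closure, Set.image_pair]
    simp only [hconj_apply]
    rw [hg2, hg1]
  have hinj : Function.Injective ⇑(MulAut.conj g).toMonoidHom :=
    (MulAut.conj g).injective
  have hiso : Nonempty (K ≃* Md m q) := by
    refine ⟨((Subgroup.equivMapOfInjective K _ hinj).trans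
      (MulEquiv.subgroupCongr hmap)).trans ?_⟩
    refine (MulEquiv.subgroupCongr (Φ_range (q := q) m k hm1 hkm).symm).trans ?_
    exact (MonoidHom.ofInjective (Φ_injective (q := q) m k (by omega) hkm)).symm
  refine ⟨⟨k, hkn, hm1, g, hmap, hiso⟩, ?_⟩
  -- normality
  intro hN
  have hKL : K = Subgroup.closure {(⟨((k : ℕ) : ZMod n), 0⟩ : Md n q), ⟨0, 1⟩} := by
    rw [← map_conj_self hN g, hmap]
  have h01 : (⟨(0 : ZMod n), 1⟩ : Md n q) ∈ K := by
    rw [hKL]; exact Subgroup.subset_closure (Set.mem_insert_of_mem _ rfl)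
  have ht1 := hN.conj_mem _ h01 (⟨(1 : ZMod n), 0⟩ : Md n q)
  have hcomp : (⟨(1 : ZMod n), 0⟩ : Md n q) * ⟨0, 1⟩ * (⟨(1 : ZMod n), 0⟩ : Md n q)⁻¹ =
      (⟨(2 : ZMod n), 1⟩ : Md n q) := by
    rw [Md.inv_def, Md.mul_def, Md.mul_def]
    ext <;> dsimp <;>
      (try simp only [Md.sgn_zero, neg_zero, zero_add, add_zero, sgn_one (by omega : 1 ≤ q),
        one_mul, mul_zero, mul_one]) <;> ring
  rw [hcomp] at ht1
  have h20 : (⟨(2 : ZMod n), 0⟩ : Md n q) ∈ K := by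
    have hmm := K.mul_mem ht1 (K.inv_mem h01)
    have hcomp2 : (⟨(2 : ZMod n), 1⟩ : Md n q) * (⟨(0 : ZMod n), 1⟩ : Md n q)⁻¹ =
        (⟨(2 : ZMod n), 0⟩ : Md n q) := by
      rw [Md.inv_def, Md.mul_def]
      ext <;> dsimp <;>
        (try simp only [Md.sgn_zero, neg_zero, zero_add, add_zero, sgn_one (by omega : 1 ≤ q),
          one_mul, mul_zero, mul_one]) <;> ring
    rwa [hcomp2] at hmm
  -- conclude k ∣ 2
  have h2ax : ((2 : ℕ) : ZMod n) ∈ axis K := by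
    rw [mem_axis]
    have : ((2 : ℕ) : ZMod n) = (2 : ZMod n) := by push_cast; ring
    rw [this]; exact h20
  obtain ⟨t, ht⟩ := (hax _).mp h2ax
  have hmodeq : (2 : ℕ) ≡ k * t [MOD n] := (ZMod.natCast_eq_natCast_iff _ _ _).mp ht
  have hmodk : (2 : ℕ) ≡ k * t [MOD k] := hmodeq.of_dvd hkn
  have hdvd2 : k ∣ 2 := by
    have h0 : (2 : ℕ) % k = k * t % k := hmodk
    rw [Nat.mul_mod_right] at h0
    exact Nat.dvd_of_mod_eq_zero h0
  have hkodd : Odd k := by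
    rcases Nat.even_or_odd k with he | ho
    · exfalso
      have : (2 : ℕ) ∣ n := dvd_trans he.two_dvd hkn
      rw [Nat.odd_iff] at hodd
      omega
    · exact ho
  have hk1 : k = 1 := by
    rcases (Nat.dvd_prime Nat.prime_two).mp hdvd2 with h | h
    · exact h
    · exfalso; rw [h, Nat.odd_iff] at hkodd; omega
  rw [hKL, hk1]
  have : (((1 : ℕ) : ZMod n)) = (1 : ZMod n) := Nat.cast_one
  rw [this]
  exact top_gen

end DpAux

/-- Every non-cyclic subgroup of `D'_{n·2^q}` (`n` odd, `n > 1`, `q > 1`) is, up to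
conjugacy, of the form `⟨u^k, w⟩ ≅ D'_{(n/k)·2^q}` for some divisor `k` of `n`; moreover such
a subgroup is normal only if it is the whole group. -/
theorem noncyclic_subgroups_Dprime (n q : ℕ) (hodd : Odd n) (hn : 1 < n) (hq : 1 < q)
    (H : Subgroup (Dprime n q)) (hH : ¬ IsCyclic H) :
    (∃ k : ℕ, k ∣ n ∧ ∃ g : Dprime n q,
        Subgroup.map (MulAut.conj g).toMonoidHom H =
          Subgroup.closure {Dprime.u n q ^ k, Dprime.w n q} ∧
        Nonempty (H ≃* Dprime (n / k) q)) ∧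
      (H.Normal → H = ⊤) := by
  haveI : NeZero n := ⟨by omega⟩
  set e := DpAux.eIso n q hn (by omega) with he
  set K := Subgroup.map e.toMonoidHom H with hKdef
  have hHK : H ≃* K := Subgroup.equivMapOfInjective H e.toMonoidHom e.injective
  have hKnc : ¬ IsCyclic K := by
    intro hc
    exact hH (isCyclic_of_surjective hHK.symm hHK.symm.surjective)
  obtain ⟨⟨k, hkn, hm1, g', hmap, ⟨φiso⟩⟩, hnorm⟩ := DpAux.md_full hodd hn hq K hKnc
  constructor
  · refine ⟨k, hkn, e.symm g', ?_, ?_⟩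
    · apply Subgroup.map_injective (f := e.toMonoidHom) e.injective
      have hcomm : e.toMonoidHom.comp (MulAut.conj (e.symm g')).toMonoidHom
          = ((MulAut.conj g').toMonoidHom).comp e.toMonoidHom := MonoidHom.ext fun x => by
        show e (e.symm g' * x * (e.symm g')⁻¹) = g' * e x * g'⁻¹
        rw [map_mul, map_mul, map_inv, MulEquiv.apply_symm_apply]
      have h1 : e.toMonoidHom (Dprime.u n q ^ k) =
          (⟨((k : ℕ) : ZMod n), 0⟩ : DpAux.Md n q) := by
        rw [map_pow]
        show (e (Dprime.u n q)) ^ k = _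
        rw [DpAux.eIso_u, DpAux.Md.pow_b0, mul_one]
      have h2 : e.toMonoidHom (Dprime.w n q) = (⟨(0 : ZMod n), 1⟩ : DpAux.Md n q) :=
        DpAux.eIso_w hn (by omega)
      calc Subgroup.map e.toMonoidHom
            (Subgroup.map (MulAut.conj (e.symm g')).toMonoidHom H)
          = Subgroup.map (e.toMonoidHom.comp (MulAut.conj (e.symm g')).toMonoidHom) H :=
            Subgroup.map_map _ _ _
        _ = Subgroup.map (((MulAut.conj g').toMonoidHom).comp e.toMonoidHom) H := by
            rw [hcomm]
        _ = Subgroup.map (MulAut.conj g').toMonoidHom K := (Subgroup.map_map _ _ _).symm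
        _ = Subgroup.closure {(⟨((k : ℕ) : ZMod n), 0⟩ : DpAux.Md n q), ⟨0, 1⟩} := hmap
        _ = Subgroup.map e.toMonoidHom
              (Subgroup.closure {Dprime.u n q ^ k, Dprime.w n q}) := by
            rw [MonoidHom.map_closure, Set.image_pair, h1, h2]
    · exact ⟨(hHK.trans φiso).trans (DpAux.eIso (n / k) q hm1 (by omega)).symm⟩
  · intro hHn
    have hKn : K.Normal := Subgroup.Normal.map hHn e.toMonoidHom e.surjective
    have hKtop := hnorm hKn
    have hcomp : e.symm.toMonoidHom.comp e.toMonoidHom = MonoidHom.id _ :=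
      MonoidHom.ext fun x => e.symm_apply_apply x
    have hfin := congrArg (Subgroup.map e.symm.toMonoidHom) hKtop
    rw [hKdef, Subgroup.map_map, hcomp, Subgroup.map_id] at hfin
    rw [hfin]
    exact Subgroup.map_top_of_surjective _ e.symm.surjective
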